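/- Under the assumptions of Sundman's theorem (all mutual distances exceed 2χ on an interval J, with the stated bounds on coordinate variations |x_i(z)-x_i(z₀)| < χ/7 etc. on the disk Δ_χ), each inverse mutual distance satisfies |r_{ij}(z)⁻¹| < 7/(4χ) for all z ∈ Δ_χ. More precisely: if X, Y : Δ_χ → ℂ³ are holomorphic with |X_k(z) - X_k(z₀)| < χ/7 and |Y_k(z) - Y_k(z₀)| < χ/7 for k = 1,2,3 and z ∈ Δ_χ, X(z₀), Y(z₀) ∈ ℝ³, and the real distance |X(z₀) - Y(z₀)| > 2χ, then |⟨X(z)-Y(z), X(z)-Y(z)⟩| > (4χ/7)² for all z ∈ Δ_χ, where ⟨·,·⟩ is the bilinear extension of the Euclidean inner product. -/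

import Mathlib

open Complex

/-- Sundman-type estimate: if `X, Y : Δ → ℂ³` have real values at `z₀`,
componentwise variations `< χ/7` on `Δ`, and the (real Euclidean) distance
`R = |X(z₀) - Y(z₀)|` satisfies `R > 2χ`, then for all `z ∈ Δ` the bilinear
square `⟨X(z)-Y(z), X(z)-Y(z)⟩ = Σ (X_k(z)-Y_k(z))²` has absolute value
`> (4χ/7)²`. -/
theorem sundman_inverse_distance_bound (χ : ℝ) (hχ : 0 < χ) (z₀ : ℂ)
    (Δ : Set ℂ) (hz₀ : z₀ ∈ Δ)
    (X Y : ℂ → Fin 3 → ℂ)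
    (hXreal : ∀ k, (X z₀ k).im = 0) (hYreal : ∀ k, (Y z₀ k).im = 0)
    (hXvar : ∀ z ∈ Δ, ∀ k, ‖X z k - X z₀ k‖ < χ / 7)
    (hYvar : ∀ z ∈ Δ, ∀ k, ‖Y z k - Y z₀ k‖ < χ / 7)
    (hR : 2 * χ < Real.sqrt (∑ k, ‖X z₀ k - Y z₀ k‖ ^ 2)) :
    ∀ z ∈ Δ, (4 * χ / 7)^2 < ‖∑ k, (X z k - Y z k)^2‖ := by
  intro z hz
  set E : Fin 3 → ℂ := fun k => X z₀ k - Y z₀ k with hE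
  set K : Fin 3 → ℂ := fun k => (X z k - Y z k) - E k with hK
  have hEim : ∀ k, (E k).im = 0 := by
    intro k; simp [hE, Complex.sub_im, hXreal k, hYreal k]
  have hEreal : ∀ k, E k = ((E k).re : ℂ) := by
    intro k
    exact Complex.ext (by simp) (by simp [hEim k])
  have hEabs : ∀ k, ‖E k‖ = |(E k).re| := by
    intro k
    conv_lhs => rw [hEreal k]
    rw [Complex.norm_real, Real.norm_eq_abs]
  have hKbound : ∀ k, ‖K k‖ ≤ 2 * χ / 7 := by
    intro k
    have h1 := hXvar z hz k
    have h2 := hYvar z hz k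
    have hid : K k = (X z k - X z₀ k) - (Y z k - Y z₀ k) := by
      simp only [hK, hE]; ring
    rw [hid, sub_eq_add_neg]
    calc ‖(X z k - X z₀ k) + -(Y z k - Y z₀ k)‖
        ≤ ‖X z k - X z₀ k‖ + ‖-(Y z k - Y z₀ k)‖ :=
          norm_add_le _ _
      _ = ‖X z k - X z₀ k‖ + ‖Y z k - Y z₀ k‖ := by
          rw [norm_neg]
      _ ≤ 2 * χ / 7 := by linarith
  set R2 : ℝ := ∑ k, (E k).re ^ 2 with hR2
  have hR2nonneg : 0 ≤ R2 := Finset.sum_nonneg fun k _ => sq_nonneg _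
  set R : ℝ := Real.sqrt R2 with hRdef
  have hRnonneg : 0 ≤ R := Real.sqrt_nonneg _
  have hR2eq : R2 = R ^ 2 := (Real.sq_sqrt hR2nonneg).symm
  have hRgt : 2 * χ < R := by
    have heq : (∑ k, ‖X z₀ k - Y z₀ k‖ ^ 2) = R2 := by
      apply Finset.sum_congr rfl
      intro k _
      rw [show X z₀ k - Y z₀ k = E k from rfl, hEabs k, _root_.sq_abs]
    rwa [heq] at hR
  have hEle : ∀ k, ‖E k‖ ≤ R := by
    intro k
    rw [hEabs k, hRdef, ← Real.sqrt_sq_eq_abs]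
    apply Real.sqrt_le_sqrt
    exact Finset.single_le_sum (f := fun k => (E k).re ^ 2)
      (fun i _ => sq_nonneg _) (Finset.mem_univ k)
  -- sum of squares of E is R2
  have hsumE : (∑ k, (E k) ^ 2) = (R2 : ℂ) := by
    rw [hR2]
    push_cast
    apply Finset.sum_congr rfl
    intro k _
    rw [← hEreal k]
  -- expansion
  have expand : (∑ k, (X z k - Y z k) ^ 2)
      = (R2 : ℂ) + ∑ k, (2 * E k * K k + K k ^ 2) := by
    rw [← hsumE, ← Finset.sum_add_distrib]
    apply Finset.sum_congr rfl
    intro k _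
    have : X z k - Y z k = E k + K k := by simp [hK]
    rw [this]; ring
  -- bound the perturbation sum
  have habsB : ‖∑ k, (2 * E k * K k + K k ^ 2)‖
      ≤ 3 * (2 * R * (2 * χ / 7) + (2 * χ / 7) ^ 2) := by
    calc ‖∑ k, (2 * E k * K k + K k ^ 2)‖
        ≤ ∑ k, ‖2 * E k * K k + K k ^ 2‖ :=
          norm_sum_le _ _
      _ ≤ ∑ _k : Fin 3, (2 * R * (2 * χ / 7) + (2 * χ / 7) ^ 2) := by
          apply Finset.sum_le_sum
          intro k _
          calc ‖2 * E k * K k + K k ^ 2‖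
              ≤ ‖2 * E k * K k‖ + ‖K k ^ 2‖ :=
                norm_add_le _ _
            _ = 2 * ‖E k‖ * ‖K k‖
                + ‖K k‖ ^ 2 := by
                rw [norm_mul, norm_mul, norm_pow]
                simp
            _ ≤ 2 * R * (2 * χ / 7) + (2 * χ / 7) ^ 2 := by
                have h1 := hEle k
                have h2 := hKbound k
                have h3 : (0:ℝ) ≤ ‖K k‖ := norm_nonneg _
                have h4 : (0:ℝ) ≤ ‖E k‖ := norm_nonneg _
                nlinarith
      _ = 3 * (2 * R * (2 * χ / 7) + (2 * χ / 7) ^ 2) := by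
          simp [Finset.sum_const]; ring
  -- lower bound on |sum|
  have hlower : R2 - 3 * (2 * R * (2 * χ / 7) + (2 * χ / 7) ^ 2)
      ≤ ‖∑ k, (X z k - Y z k) ^ 2‖ := by
    rw [expand]
    have htri := norm_add_le
      ((R2 : ℂ) + ∑ k, (2 * E k * K k + K k ^ 2)) (-(∑ k, (2 * E k * K k + K k ^ 2)))
    rw [add_neg_cancel_right, norm_neg] at htri
    have hRabs : ‖(R2 : ℂ)‖ = R2 := by
      rw [Complex.norm_real, Real.norm_eq_abs, _root_.abs_of_nonneg hR2nonneg]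
    rw [hRabs] at htri
    linarith
  -- final arithmetic
  have : (4 * χ / 7) ^ 2 < R2 - 3 * (2 * R * (2 * χ / 7) + (2 * χ / 7) ^ 2) := by
    rw [hR2eq]
    nlinarith [mul_pos (sub_pos.mpr hRgt) (by positivity : (0:ℝ) < R + 2 * χ / 7)]
  linarith
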